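/- Let d, k ∈ ℕ, let h₁, ..., h_k : ℝ^d → ℝ be affine functions, let v ∈ ℝ^d \ {0}, w ∈ ℝ^d, and let A = {w + λv : λ ∈ ℝ} be the line through w in direction v. Then there exist sign vectors i₀, i₁, ..., i_k ∈ {0,1}^k such that A ⊆ ∪_{j=0}^k H(h, i_j), where for i = (i₁,...,i_k) ∈ {0,1}^k the set H(h, i) = ∩_{m=1}^k {x ∈ ℝ^d : (-1)^{i_m} h_m(x) ≤ 0} is the intersection of the corresponding closed half-spaces. -/
import Mathlib


theorem stmt11 (d k : ℕ) (hd : 1 ≤ d) (hk : 1 ≤ k)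
    (h : Fin k → (Fin d → ℝ) → ℝ)
    (haff : ∀ m : Fin k, ∃ (c : ℝ) (w : Fin d → ℝ), ∀ x : Fin d → ℝ, h m x = c + ∑ j, w j * x j)
    (v w : Fin d → ℝ) (hv : v ≠ 0) :
    ∃ I : Fin (k + 1) → (Fin k → Fin 2),
      (Set.range fun t : ℝ => w + t • v) ⊆
        ⋃ j : Fin (k + 1), {x : Fin d → ℝ | ∀ m : Fin k, (-1 : ℝ) ^ ((I j m : ℕ)) * h m x ≤ 0} := by
  classical
  choose c wc hcw using haff
  set g : Fin k → ℝ → ℝ := fun m t => h m (w + t • v) with hgdef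
  set b : Fin k → ℝ := fun m => ∑ j, wc m j * v j with hbdef
  have hgaff : ∀ m t, g m t = (c m + ∑ j, wc m j * w j) + b m * t := by
    intro m t
    simp only [g, hcw, b]
    have hj : ∀ j ∈ Finset.univ, wc m j * (w + t • v) j
        = wc m j * w j + wc m j * v j * t := by
      intro j _
      simp only [Pi.add_apply, Pi.smul_apply, smul_eq_mul]
      ring
    rw [Finset.sum_congr rfl hj, Finset.sum_add_distrib, ← Finset.sum_mul]
    ring
  set I : ℝ → Fin k → Fin 2 := fun t m => if 0 < g m t then 1 else 0 with hIdef
  set D : ℝ → Fin k → ℕ := fun t m =>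
    if 0 ≤ b m then (if 0 < g m t then 1 else 0) else (if 0 < g m t then 0 else 1) with hDdef
  set σ : (Fin k → Fin 2) → ℕ :=
    fun u => ∑ m, (if 0 ≤ b m then (u m : ℕ) else 1 - (u m : ℕ)) with hσdef
  have hDI : ∀ t m, D t m = if 0 ≤ b m then (I t m : ℕ) else 1 - (I t m : ℕ) := by
    intro t m
    simp only [D, I]
    split_ifs <;> simp
  have hσD : ∀ t, σ (I t) = ∑ m, D t m := by
    intro t
    simp only [σ]
    exact Finset.sum_congr rfl fun m _ => (hDI t m).symm
  have hmono : ∀ m, ∀ t₁ t₂ : ℝ, t₁ ≤ t₂ → D t₁ m ≤ D t₂ m := by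
    intro m t₁ t₂ hle
    have hdiff : g m t₂ - g m t₁ = b m * (t₂ - t₁) := by
      rw [hgaff, hgaff]; ring
    simp only [D]
    rcases le_or_gt 0 (b m) with hb | hb
    · have : g m t₁ ≤ g m t₂ := by nlinarith
      simp only [if_pos hb]
      split_ifs <;> first | rfl | linarith | omega
    · have : g m t₂ ≤ g m t₁ := by nlinarith
      simp only [if_neg (not_le.mpr hb)]
      split_ifs <;> first | rfl | linarith | omega
  have hkey : ∀ t₁ t₂ : ℝ, σ (I t₁) = σ (I t₂) → I t₁ = I t₂ := by
    have main : ∀ t₁ t₂ : ℝ, t₁ ≤ t₂ → σ (I t₁) = σ (I t₂) → I t₁ = I t₂ := by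
      intro t₁ t₂ hle hσeq
      rw [hσD, hσD] at hσeq
      have hD := (Finset.sum_eq_sum_iff_of_le (fun m _ => hmono m t₁ t₂ hle)).mp hσeq
      funext m
      have hDm : D t₁ m = D t₂ m := by
        have := hD m (Finset.mem_univ m); omega
      rw [hDI, hDI] at hDm
      have h1 : (I t₁ m : ℕ) < 2 := (I t₁ m).is_lt
      have h2 : (I t₂ m : ℕ) < 2 := (I t₂ m).is_lt
      have : (I t₁ m : ℕ) = (I t₂ m : ℕ) := by
        split_ifs at hDm <;> omega
      exact Fin.val_injective this
    intro t₁ t₂ hσeq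
    rcases le_total t₁ t₂ with hle | hle
    · exact main t₁ t₂ hle hσeq
    · exact (main t₂ t₁ hle hσeq.symm).symm
  have hσle : ∀ t, σ (I t) ≤ k := by
    intro t
    have : σ (I t) ≤ ∑ _m : Fin k, 1 := by
      apply Finset.sum_le_sum
      intro m _
      have : (I t m : ℕ) < 2 := (I t m).is_lt
      split_ifs <;> omega
    simpa using this
  refine ⟨fun j => if hex : ∃ t : ℝ, σ (I t) = (j : ℕ) then I hex.choose else I 0, ?_⟩
  rintro x ⟨t, rfl⟩
  rw [Set.mem_iUnion]
  refine ⟨⟨σ (I t), Nat.lt_succ_of_le (hσle t)⟩, ?_⟩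
  intro m
  have hex : ∃ t' : ℝ, σ (I t') = ((⟨σ (I t), Nat.lt_succ_of_le (hσle t)⟩ : Fin (k+1)) : ℕ) :=
    ⟨t, rfl⟩
  simp only [dif_pos hex]
  have hIeq : I hex.choose = I t := hkey _ _ hex.choose_spec
  rw [hIeq]
  have : (-1 : ℝ) ^ ((I t m : ℕ)) * g m t ≤ 0 := by
    simp only [I]
    split_ifs with hg
    · simp; linarith
    · simp; linarith
  exact this
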